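/- Let r ≥ 2 be an integer and for 0 < φ < π/(r+1) set σ(φ) = (sin((r+1)φ))^{(r+1)/2}/(sin(2φ)·(sin((r−1)φ))^{(r−1)/2}) and f(φ) = π/2 − (r−1)a(φ)sin(φ) + arctan((1−a(φ)²)/(2a(φ)sin(φ))) with a(φ) = (sin((r+1)φ)/sin((r−1)φ))^{1/2}. Then for all φ in (0, π/(r+1)): −(1/π)·f'(φ)/σ'(φ) = sin(2φ)·sin(φ)·(sin((r−1)φ))^{r/2−1} / (π·(sin((r+1)φ))^{r/2}). -/

import Mathlib

set_option maxHeartbeats 2000000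


open Real Set

/-- on `(0, π/(r+1))`,
`−(1/π)·f'(φ)/σ'(φ) = sin(2φ)sin(φ)(sin((r−1)φ))^{r/2−1}/(π(sin((r+1)φ))^{r/2})`. -/
theorem density_identity (r : ℕ) (hr : 2 ≤ r)
    (a σ f : ℝ → ℝ)
    (ha : ∀ φ, a φ =
      Real.sqrt (Real.sin (((r : ℝ) + 1) * φ) / Real.sin (((r : ℝ) - 1) * φ)))
    (hσ : ∀ φ, σ φ =
      Real.sin (((r : ℝ) + 1) * φ) ^ (((r : ℝ) + 1) / 2) /
        (Real.sin (2 * φ) * Real.sin (((r : ℝ) - 1) * φ) ^ (((r : ℝ) - 1) / 2)))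
    (hf : ∀ φ, f φ = π / 2 - ((r : ℝ) - 1) * a φ * Real.sin φ +
        Real.arctan ((1 - a φ ^ 2) / (2 * a φ * Real.sin φ))) :
    ∀ φ ∈ Set.Ioo 0 (π / (r + 1)),
      -(1 / π) * (deriv f φ / deriv σ φ) =
        Real.sin (2 * φ) * Real.sin φ *
            Real.sin (((r : ℝ) - 1) * φ) ^ ((r : ℝ) / 2 - 1) /
          (π * Real.sin (((r : ℝ) + 1) * φ) ^ ((r : ℝ) / 2)) := by
  intro φ hφ
  obtain ⟨hφ0, hφπ⟩ := hφ
  have hr2 : (2:ℝ) ≤ (r:ℝ) := by exact_mod_cast hr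
  have hπ : 0 < π := Real.pi_pos
  have hrp1 : (0:ℝ) < (r:ℝ) + 1 := by linarith
  have h1 : ((r:ℝ) + 1) * φ < π := by
    calc ((r:ℝ)+1)*φ = φ*((r:ℝ)+1) := by ring
    _ < π := by rwa [← lt_div_iff₀ hrp1]
  have hsp : 0 < Real.sin (((r:ℝ)+1)*φ) :=
    Real.sin_pos_of_pos_of_lt_pi (mul_pos hrp1 hφ0) h1
  have hm1 : (0:ℝ) < (r:ℝ) - 1 := by linarith
  have h2 : ((r:ℝ)-1)*φ < π := by nlinarith
  have hsm : 0 < Real.sin (((r:ℝ)-1)*φ) :=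
    Real.sin_pos_of_pos_of_lt_pi (mul_pos hm1 hφ0) h2
  have h3 : 2*φ < π := by nlinarith
  have hs2 : 0 < Real.sin (2*φ) := Real.sin_pos_of_pos_of_lt_pi (by linarith) h3
  have hs : 0 < Real.sin φ := Real.sin_pos_of_pos_of_lt_pi hφ0 (by linarith)
  have hc : 0 < Real.cos φ := Real.cos_pos_of_mem_Ioo ⟨by linarith, by linarith⟩
  -- abbreviations
  set sp := Real.sin (((r:ℝ)+1)*φ) with hsp_def
  set sm := Real.sin (((r:ℝ)-1)*φ) with hsm_def
  set cp := Real.cos (((r:ℝ)+1)*φ) with hcp_def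
  set cm := Real.cos (((r:ℝ)-1)*φ) with hcm_def
  set s := Real.sin φ with hs_def
  set c := Real.cos φ with hc_def
  set A := Real.sqrt (sp / sm) with hA_def
  have hAp : 0 < A := Real.sqrt_pos.mpr (div_pos hsp hsm)
  have hA2 : A^2 = sp / sm := Real.sq_sqrt (div_pos hsp hsm).le
  have hspA : sp = A^2 * sm := by rw [hA2]; field_simp
  -- trig identities
  have hs2e : Real.sin (2*φ) = 2*s*c := Real.sin_two_mul φ
  have hpy : s^2 + c^2 = 1 := Real.sin_sq_add_cos_sq φ
  have hc2e : Real.cos (2*φ) = 1 - 2*s^2 := by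
    rw [Real.cos_two_mul']; linarith [hpy]
  have hcp2 : cp = (sp*(1-2*s^2) - sm)/(2*s*c) := by
    have h : sm = sp * Real.cos (2*φ) - cp * Real.sin (2*φ) := by
      rw [hsm_def, show ((r:ℝ)-1)*φ = ((r:ℝ)+1)*φ - 2*φ by ring, Real.sin_sub]
    rw [hc2e, hs2e] at h
    field_simp
    linarith [h]
  have hcm2 : cm = (sp - sm*(1-2*s^2))/(2*s*c) := by
    have h : sp = sm * Real.cos (2*φ) + cm * Real.sin (2*φ) := by
      rw [hsp_def, show ((r:ℝ)+1)*φ = ((r:ℝ)-1)*φ + 2*φ by ring, Real.sin_add]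
    rw [hc2e, hs2e] at h
    field_simp
    linarith [h]
  -- derivative of sin (k x)
  have hsin : ∀ k : ℝ, HasDerivAt (fun x : ℝ => Real.sin (k*x)) (k * Real.cos (k*φ)) φ := by
    intro k
    exact ((Real.hasDerivAt_sin (k*φ)).comp φ ((hasDerivAt_id φ).const_mul k)).congr_deriv (by simp [mul_comm])
  -- the function F (= f)
  have hfF : f = (fun x => π / 2 - ((r : ℝ) - 1) *
      Real.sqrt (Real.sin (((r : ℝ) + 1) * x) / Real.sin (((r : ℝ) - 1) * x)) * Real.sin x +
      Real.arctan ((1 - Real.sqrt (Real.sin (((r : ℝ) + 1) * x) / Real.sin (((r : ℝ) - 1) * x)) ^ 2) /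
        (2 * Real.sqrt (Real.sin (((r : ℝ) + 1) * x) / Real.sin (((r : ℝ) - 1) * x)) * Real.sin x))) := by
    funext x; rw [hf x, ha x]
  -- derivative of the sqrt part
  have hQd : HasDerivAt (fun x => Real.sin (((r:ℝ)+1)*x) / Real.sin (((r:ℝ)-1)*x))
      (((((r:ℝ)+1) * cp) * sm - sp * (((r:ℝ)-1) * cm)) / sm^2) φ :=
    (hsin _).div (hsin _) hsm.ne'
  have hA'raw : HasDerivAt (fun x => Real.sqrt (Real.sin (((r:ℝ)+1)*x) / Real.sin (((r:ℝ)-1)*x)))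
      ((((((r:ℝ)+1) * cp) * sm - sp * (((r:ℝ)-1) * cm)) / sm^2) / (2 * A)) φ :=
    hQd.sqrt (div_pos hsp hsm).ne'
  set ADn : ℝ := -((r:ℝ)*((1-A^2)^2 + 4*A^2*s^2) + 1 - A^4)/(4*A*s*c) with hADn_def
  have hADeq : (((((r:ℝ)+1) * cp) * sm - sp * (((r:ℝ)-1) * cm)) / sm^2) / (2 * A) = ADn := by
    rw [hADn_def, hcp2, hcm2, hspA]
    field_simp
    ring
  rw [hADeq] at hA'raw
  have hsinφ : HasDerivAt Real.sin c φ := Real.hasDerivAt_sin φ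
  have hterm1 : HasDerivAt (fun x => ((r:ℝ)-1) *
      Real.sqrt (Real.sin (((r:ℝ)+1)*x) / Real.sin (((r:ℝ)-1)*x)) * Real.sin x)
      ((((r:ℝ)-1) * ADn) * s + (((r:ℝ)-1) * A) * c) φ :=
    (hA'raw.const_mul ((r:ℝ)-1)).mul hsinφ
  have hA2' : HasDerivAt (fun x =>
      Real.sqrt (Real.sin (((r:ℝ)+1)*x) / Real.sin (((r:ℝ)-1)*x)) ^ 2) (2*A*ADn) φ := by
    exact (hA'raw.pow 2).congr_deriv (by norm_num; exact Or.inl rfl)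
  have hnum : HasDerivAt (fun x =>
      1 - Real.sqrt (Real.sin (((r:ℝ)+1)*x) / Real.sin (((r:ℝ)-1)*x)) ^ 2) (-(2*A*ADn)) φ :=
    hA2'.const_sub 1
  have hden : HasDerivAt (fun x =>
      2 * Real.sqrt (Real.sin (((r:ℝ)+1)*x) / Real.sin (((r:ℝ)-1)*x)) * Real.sin x)
      ((2 * ADn) * s + (2 * A) * c) φ :=
    (hA'raw.const_mul 2).mul hsinφ
  have hdenne : 2 * A * s ≠ 0 := by positivity
  have hg : HasDerivAt (fun x =>
      (1 - Real.sqrt (Real.sin (((r:ℝ)+1)*x) / Real.sin (((r:ℝ)-1)*x)) ^ 2) /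
        (2 * Real.sqrt (Real.sin (((r:ℝ)+1)*x) / Real.sin (((r:ℝ)-1)*x)) * Real.sin x))
      (((-(2*A*ADn)) * (2*A*s) - (1 - A^2) * ((2 * ADn) * s + (2 * A) * c)) / (2*A*s)^2) φ :=
    hnum.div hden hdenne
  have harc := hg.arctan
  have hF : HasDerivAt f
      (-((((r:ℝ)-1) * ADn) * s + (((r:ℝ)-1) * A) * c) +
        1 / (1 + ((1 - A^2) / (2*A*s))^2) *
          (((-(2*A*ADn)) * (2*A*s) - (1 - A^2) * ((2 * ADn) * s + (2 * A) * c)) / (2*A*s)^2)) φ := by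
    rw [hfF]
    exact ((hterm1.const_sub (π/2)).add harc)
  set Nv : ℝ := ((r:ℝ)+1)^2 + ((r:ℝ)-1)^2*(A^2)^2 - 2*((r:ℝ)^2-1)*A^2*(1-2*s^2) with hNv_def
  have hFval : (-((((r:ℝ)-1) * ADn) * s + (((r:ℝ)-1) * A) * c) +
        1 / (1 + ((1 - A^2) / (2*A*s))^2) *
          (((-(2*A*ADn)) * (2*A*s) - (1 - A^2) * ((2 * ADn) * s + (2 * A) * c)) / (2*A*s)^2))
      = Nv / (4*A*c) := by
    rw [hADn_def, hNv_def]
    rw [show (1 + ((1 - A^2) / (2*A*s))^2) = ((1-A^2)^2 + 4*A^2*s^2)/(4*A^2*s^2) by field_simp; ring]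
    have h4 : (0:ℝ) < 4*A^2*s^2 + (1-A^2)^2 := by positivity
    field_simp
    linear_combination ((-8)*(r:ℝ)*A^2 + 16*(r:ℝ)*A^4*(1-2*s^2) - 8*(r:ℝ)*A^6 - 8*A^2 + 32*A^4*s^2 + 8*A^6) * hpy
  -- sigma part
  have hsigeq : σ = (fun x => Real.sin (((r:ℝ)+1)*x) ^ (((r:ℝ)+1)/2) /
      (Real.sin (2*x) * Real.sin (((r:ℝ)-1)*x) ^ (((r:ℝ)-1)/2))) := funext hσ
  have hPp : HasDerivAt (fun x => Real.sin (((r:ℝ)+1)*x) ^ (((r:ℝ)+1)/2))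
      ((((r:ℝ)+1) * cp) * (((r:ℝ)+1)/2) * sp ^ (((r:ℝ)+1)/2 - 1)) φ :=
    (hsin _).rpow_const (Or.inl hsp.ne')
  have hQm : HasDerivAt (fun x => Real.sin (((r:ℝ)-1)*x) ^ (((r:ℝ)-1)/2))
      ((((r:ℝ)-1) * cm) * (((r:ℝ)-1)/2) * sm ^ (((r:ℝ)-1)/2 - 1)) φ :=
    (hsin _).rpow_const (Or.inl hsm.ne')
  have hsin2 : HasDerivAt (fun x : ℝ => Real.sin (2*x)) (2 * Real.cos (2*φ)) φ := hsin 2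
  have hdenσ : HasDerivAt (fun x => Real.sin (2*x) * Real.sin (((r:ℝ)-1)*x) ^ (((r:ℝ)-1)/2))
      ((2 * Real.cos (2*φ)) * sm ^ (((r:ℝ)-1)/2) +
        Real.sin (2*φ) * ((((r:ℝ)-1) * cm) * (((r:ℝ)-1)/2) * sm ^ (((r:ℝ)-1)/2 - 1))) φ :=
    hsin2.mul hQm
  have hQ0 : (0:ℝ) < sm ^ (((r:ℝ)-1)/2) := Real.rpow_pos_of_pos hsm _
  have hP0 : (0:ℝ) < sp ^ (((r:ℝ)+1)/2) := Real.rpow_pos_of_pos hsp _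
  have hdne : Real.sin (2*φ) * sm ^ (((r:ℝ)-1)/2) ≠ 0 := by positivity
  have hS : HasDerivAt σ
      (((((r:ℝ)+1) * cp) * (((r:ℝ)+1)/2) * sp ^ (((r:ℝ)+1)/2 - 1) *
          (Real.sin (2*φ) * sm ^ (((r:ℝ)-1)/2)) -
        sp ^ (((r:ℝ)+1)/2) * ((2 * Real.cos (2*φ)) * sm ^ (((r:ℝ)-1)/2) +
          Real.sin (2*φ) * ((((r:ℝ)-1) * cm) * (((r:ℝ)-1)/2) * sm ^ (((r:ℝ)-1)/2 - 1)))) /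
        (Real.sin (2*φ) * sm ^ (((r:ℝ)-1)/2))^2) φ := by
    rw [hsigeq]
    exact hPp.div hdenσ hdne
  set NS : ℝ := ((r:ℝ)+1)^2 + ((r:ℝ)-1)^2*(sp/sm)^2 - 2*((r:ℝ)^2-1)*(sp/sm)*(1-2*s^2) with hNS_def
  have hSval : ((((r:ℝ)+1) * cp) * (((r:ℝ)+1)/2) * sp ^ (((r:ℝ)+1)/2 - 1) *
          (Real.sin (2*φ) * sm ^ (((r:ℝ)-1)/2)) -
        sp ^ (((r:ℝ)+1)/2) * ((2 * Real.cos (2*φ)) * sm ^ (((r:ℝ)-1)/2) +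
          Real.sin (2*φ) * ((((r:ℝ)-1) * cm) * (((r:ℝ)-1)/2) * sm ^ (((r:ℝ)-1)/2 - 1)))) /
        (Real.sin (2*φ) * sm ^ (((r:ℝ)-1)/2))^2
      = -(sp ^ (((r:ℝ)+1)/2) * NS) / (2*(sp/sm)*(2*s*c)^2* sm ^ (((r:ℝ)-1)/2)) := by
    rw [hNS_def, Real.rpow_sub hsp, Real.rpow_one, Real.rpow_sub hsm, Real.rpow_one,
      hcp2, hcm2, hs2e, hc2e]
    field_simp
    ring
  rw [hSval] at hS
  have hNS : NS = Nv := by rw [hNS_def, hNv_def, ← hA2]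
  have hrr : (0:ℝ) < (r:ℝ)^2 - 1 := by
    rw [show (r:ℝ)^2-1 = ((r:ℝ)-1)*((r:ℝ)+1) by ring]; exact mul_pos hm1 hrp1
  have hNvpos : 0 < Nv := by
    have hNvalt : Nv = (((r:ℝ)+1) - ((r:ℝ)-1)*A^2)^2 + 4*(((r:ℝ)^2-1)*A^2)*s^2 := by
      rw [hNv_def]; ring
    have h1' : 0 < 4*(((r:ℝ)^2-1)*A^2)*s^2 :=
      mul_pos (mul_pos (by norm_num : (0:ℝ) < 4) (mul_pos hrr (pow_pos hAp 2))) (pow_pos hs 2)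
    rw [hNvalt]
    exact add_pos_of_nonneg_of_pos (sq_nonneg _) h1'
  have hdf : deriv f φ = Nv/(4*A*c) := by rw [hF.deriv]; exact hFval
  have hds : deriv σ φ =
      -(sp ^ (((r:ℝ)+1)/2) * NS) / (2*(sp/sm)*(2*s*c)^2* sm ^ (((r:ℝ)-1)/2)) := hS.deriv
  rw [hdf, hds, hNS, ← hA2, hs2e]
  have hPsplit : sp ^ (((r:ℝ)+1)/2) = sp ^ ((r:ℝ)/2) * sp ^ ((1:ℝ)/2) := by
    rw [show ((r:ℝ)+1)/2 = (r:ℝ)/2 + 1/2 by ring, Real.rpow_add hsp]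
  have hQsplit : sm ^ (((r:ℝ)-1)/2) = sm ^ ((r:ℝ)/2 - 1) * sm ^ ((1:ℝ)/2) := by
    rw [show ((r:ℝ)-1)/2 = ((r:ℝ)/2 - 1) + 1/2 by ring, Real.rpow_add hsm]
  have hAsplit : A = sp ^ ((1:ℝ)/2) / sm ^ ((1:ℝ)/2) := by
    rw [hA_def, ← Real.sqrt_eq_rpow, ← Real.sqrt_eq_rpow, Real.sqrt_div hsp.le]
  have hX : (0:ℝ) < sp ^ ((r:ℝ)/2) := Real.rpow_pos_of_pos hsp _
  have hY : (0:ℝ) < sm ^ ((r:ℝ)/2 - 1) := Real.rpow_pos_of_pos hsm _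
  have hU : (0:ℝ) < sp ^ ((1:ℝ)/2) := Real.rpow_pos_of_pos hsp _
  have hV : (0:ℝ) < sm ^ ((1:ℝ)/2) := Real.rpow_pos_of_pos hsm _
  rw [hPsplit, hQsplit, hAsplit]
  field_simp
  ring
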